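/- The discrete HAD jump operator A_j preserves the partial order on configurations: if η ≤ η' pointwise and both have a particle at some site ≤ j, then A_j η ≤ A_j η' pointwise, where A_j moves the closest particle weakly to the left of j to site j. -/
import Mathlib


noncomputable section
open Classical

/-- Position of the closest particle of `η` weakly to the left of `j`:
`i(η,j) = max {k ≤ j : η k = 1}`. -/
def ipos (η : ℤ → ℤ) (j : ℤ) : ℤ := sSup {k : ℤ | k ≤ j ∧ η k = 1}

/-- Discrete HAD jump operator at `j`: the closest particle weakly to the left of `j`
jumps to `j`. -/
def Ahad (j : ℤ) (η : ℤ → ℤ) : ℤ → ℤ := fun k =>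
  if k = j then 1
  else if k = ipos η j then 0
  else η k

end

/-- The discrete HAD jump operator `A_j` preserves the pointwise partial order on
configurations in `{0,1}^ℤ`, provided both configurations have a particle weakly to the
left of `j`. -/
theorem had_jump_monotone (j : ℤ) (η η' : ℤ → ℤ)
    (hη : ∀ x, η x = 0 ∨ η x = 1) (hη' : ∀ x, η' x = 0 ∨ η' x = 1)
    (hle : ∀ x, η x ≤ η' x)
    (hex : ∃ k ≤ j, η k = 1) (hex' : ∃ k ≤ j, η' k = 1) :
    ∀ x, Ahad j η x ≤ Ahad j η' x := by
  obtain ⟨k, hkj, hk1⟩ := hex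
  obtain ⟨k', hkj', hk1'⟩ := hex'
  have hne : {m : ℤ | m ≤ j ∧ η m = 1}.Nonempty := ⟨k, hkj, hk1⟩
  have hne' : {m : ℤ | m ≤ j ∧ η' m = 1}.Nonempty := ⟨k', hkj', hk1'⟩
  have hbdd : BddAbove {m : ℤ | m ≤ j ∧ η m = 1} := ⟨j, fun m hm => hm.1⟩
  have hbdd' : BddAbove {m : ℤ | m ≤ j ∧ η' m = 1} := ⟨j, fun m hm => hm.1⟩
  have hImem : ipos η j ∈ {m : ℤ | m ≤ j ∧ η m = 1} := Int.csSup_mem hne hbdd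
  have hImem' : ipos η' j ∈ {m : ℤ | m ≤ j ∧ η' m = 1} := Int.csSup_mem hne' hbdd'
  have hII : ipos η j ≤ ipos η' j := by
    apply le_csSup hbdd'
    have h1 := hImem.2
    have h2 := hle (ipos η j)
    rcases hη' (ipos η j) with h | h
    · exact ⟨hImem.1, by omega⟩
    · exact ⟨hImem.1, h⟩
  intro x
  unfold Ahad
  by_cases hxj : x = j
  · simp [hxj]
  · simp only [hxj, if_false]
    by_cases hxI' : x = ipos η' j
    · by_cases hxI : x = ipos η j
      · have heq : ipos η j = ipos η' j := hxI ▸ hxI'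
        simp [hxI, heq]
      · subst hxI'
        simp [hxI]
        by_contra h
        have hx1 : η (ipos η' j) = 1 := by rcases hη (ipos η' j) with h0 | h1 <;> omega
        have hxle : ipos η' j ≤ ipos η j := le_csSup hbdd ⟨hImem'.1, hx1⟩
        exact hxI (le_antisymm hxle hII)
    · by_cases hxI : x = ipos η j
      · simp only [hxI, hxI', if_true, if_false]
        have : x ≠ ipos η' j := hxI'
        rw [hxI] at this
        simp only [this, if_false]
        have := hle (ipos η j)
        have := hImem.2
        omega
      · simp only [hxI, hxI', if_false]
        exact hle x
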